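/- Let P1 be a probability measure on a measurable space 𝔜, let q: 𝔜 → ℝ be measurable with 0 < ∫ e^q dP1 < ∞, let p ∈ (0,1), let P0 be the probability measure with dP0 = e^q dP1 / ∫ e^q dP1, let P = (1−p)·P0 + p·P1, and define η ∈ ℝ by e^η = ((1−p)/p)/∫ e^q dP1. Then for every measurable set A ⊆ 𝔜, (1−p)·P0(A) = ∫_A e^{η+q(y)}/(1 + e^{η+q(y)}) dP(y). (Equivalently: the conditional probability of non-observation given outcome y is the logistic function of η + q(y), i.e. logit Pr(R=0 | Y=y) = η + q(y).) -/

import Mathlib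

open MeasureTheory Real ENNReal NNReal

/-- With `P0` the tilted version of `P1`, `P = (1-p)·P0 + p·P1` and
`e^η = ((1-p)/p)/∫ e^q dP1`, we have
`(1-p)·P0(A) = ∫_A e^{η+q}/(1+e^{η+q}) dP` for every measurable `A`,
i.e. `logit Pr(R=0 | Y=y) = η + q(y)`. -/
theorem selection_bias_logistic_representation
    {𝔜 : Type*} [MeasurableSpace 𝔜]
    (P1 : Measure 𝔜) [IsProbabilityMeasure P1]
    (q : 𝔜 → ℝ) (hq : Measurable q)
    (hint : Integrable (fun y => Real.exp (q y)) P1)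
    (hpos : 0 < ∫ y, Real.exp (q y) ∂P1)
    (p : ℝ) (hp : p ∈ Set.Ioo (0 : ℝ) 1)
    (P0 : Measure 𝔜)
    (hP0 : P0 = P1.withDensity
      (fun y => ENNReal.ofReal (Real.exp (q y) / ∫ z, Real.exp (q z) ∂P1)))
    (P : Measure 𝔜)
    (hP : P = ENNReal.ofReal (1 - p) • P0 + ENNReal.ofReal p • P1)
    (η : ℝ)
    (hη : Real.exp η = ((1 - p) / p) / ∫ z, Real.exp (q z) ∂P1) :
    ∀ A : Set 𝔜, MeasurableSet A →
      ENNReal.ofReal (1 - p) * P0 A =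
        ENNReal.ofReal
          (∫ y in A, Real.exp (η + q y) / (1 + Real.exp (η + q y)) ∂P) := by
  intro A hA
  set c : ℝ := ∫ z, Real.exp (q z) ∂P1 with hc
  have hc0 : 0 < c := hpos
  have hp0 : 0 < p := hp.1
  have hp1 : p < 1 := hp.2
  have h1p : 0 < 1 - p := by linarith
  set f : 𝔜 → ℝ := fun y => Real.exp (η + q y) / (1 + Real.exp (η + q y)) with hf
  have hfmeas : Measurable f := by
    apply Measurable.div ((measurable_const.add hq).exp)
      (measurable_const.add ((measurable_const.add hq).exp))
  have hfpos : ∀ y, 0 < 1 + Real.exp (η + q y) := fun y => by positivity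
  have hfbd : ∀ y, ‖f y‖ ≤ 1 := by
    intro y
    rw [Real.norm_eq_abs, abs_of_nonneg (by positivity)]
    rw [div_le_one (hfpos y)]
    linarith [Real.exp_pos (η + q y)]
  -- densities
  set g : 𝔜 → ℝ := fun y => Real.exp (q y) / c with hg
  have hgmeas : Measurable g := hq.exp.div measurable_const
  have hgint : Integrable g P1 := hint.div_const c
  have hgnn : ∀ y, 0 ≤ g y := fun y => by positivity
  have hP0fin : IsFiniteMeasure P0 := by
    rw [hP0]
    exact isFiniteMeasure_withDensity
      (by rw [← ofReal_integral_eq_lintegral_ofReal hgint (Filter.Eventually.of_forall hgnn)]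
          exact ENNReal.ofReal_ne_top)
  -- integrability of f on restricted measures
  have hif1 : Integrable f (P1.restrict A) :=
    (integrable_const (1:ℝ)).mono' (hfmeas.aestronglyMeasurable)
      (Filter.Eventually.of_forall hfbd)
  have hif0 : Integrable f (P0.restrict A) :=
    (integrable_const (1:ℝ)).mono' (hfmeas.aestronglyMeasurable)
      (Filter.Eventually.of_forall hfbd)
  -- split the integral
  have hsplit : ∫ y in A, f y ∂P
      = (1 - p) * ∫ y in A, f y ∂P0 + p * ∫ y in A, f y ∂P1 := by
    rw [hP, Measure.restrict_add, Measure.restrict_smul, Measure.restrict_smul,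
      integral_add_measure (hif0.smul_measure ENNReal.ofReal_ne_top)
        (hif1.smul_measure ENNReal.ofReal_ne_top),
      integral_smul_measure, integral_smul_measure,
      ENNReal.toReal_ofReal h1p.le, ENNReal.toReal_ofReal hp0.le, smul_eq_mul, smul_eq_mul]
  -- integral over P0 in terms of P1
  have hP0int : ∫ y in A, f y ∂P0 = ∫ y in A, g y * f y ∂P1 := by
    rw [hP0, restrict_withDensity hA]
    have : (fun y => ENNReal.ofReal (Real.exp (q y) / c))
        = fun y => ((g y).toNNReal : ℝ≥0∞) := by
      funext y; simp [ENNReal.ofReal, hg]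
    rw [this, integral_withDensity_eq_integral_smul (hgmeas.real_toNNReal) f]
    congr 1; funext y
    simp [NNReal.smul_def, Real.coe_toNNReal _ (hgnn y)]
  -- pointwise identity
  have hpt : ∀ y, (1 - p) * (g y * f y) + p * f y = (1 - p) * g y := by
    intro y
    have hE : Real.exp (η + q y) = ((1 - p) / p) / c * Real.exp (q y) := by
      rw [Real.exp_add, hη]
    simp only [hf, hg, hE]
    have h1 : 1 + (1 - p) / p / c * Real.exp (q y) ≠ 0 := by positivity
    field_simp
    ring
  -- combine
  have hgf : Integrable (fun y => g y * f y) (P1.restrict A) := by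
    have h : Integrable (fun y => f y * g y) (P1.restrict A) :=
      Integrable.bdd_mul hgint.restrict hfmeas.aestronglyMeasurable (Filter.Eventually.of_forall hfbd)
    exact h.congr (Filter.Eventually.of_forall fun y => mul_comm _ _)
  have h1 : Integrable (fun y => (1 - p) * (g y * f y)) (P1.restrict A) := hgf.const_mul _
  have h2 : Integrable (fun y => p * f y) (P1.restrict A) := hif1.const_mul _
  have hcomb : ∫ y in A, f y ∂P = ∫ y in A, (1 - p) * g y ∂P1 := by
    rw [hsplit, hP0int, ← integral_const_mul, ← integral_const_mul, ← integral_add h1 h2]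
    exact integral_congr_ae (Filter.Eventually.of_forall fun y => hpt y)
  -- LHS
  have hLHS : ENNReal.ofReal (1 - p) * P0 A = ENNReal.ofReal ((1 - p) * ∫ y in A, g y ∂P1) := by
    rw [hP0, withDensity_apply _ hA,
      ← ofReal_integral_eq_lintegral_ofReal hgint.restrict (Filter.Eventually.of_forall hgnn),
      ← ENNReal.ofReal_mul h1p.le]
  rw [hLHS, hcomb, integral_const_mul]
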